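/- Let U ⊆ ℝ × ℝⁿ be open, let ρ : ℝ × ℝⁿ → ℝ be twice continuously differentiable and strictly positive on U, let b : ℝ × ℝⁿ → ℝⁿ be continuously differentiable on U, and let A : ℝⁿ → ℝⁿ be a continuous linear map. Define the score-corrected velocity field ṽ(t,x) := b(t,x) − A(∇ₓ log ρ(t,x)) on U. Then at every point (t,x) ∈ U, the Fokker–Planck identity ∂ₜρ(t,x) + divₓ(ρ b)(t,x) = divₓ(y ↦ A(∇ₓρ(t,y)))(x) holds if and only if the continuity-equation identity ∂ₜρ(t,x) + divₓ(ρ ṽ)(t,x) = 0 holds, where divₓ denotes the divergence in the spatial variable of the corresponding time-frozen map. -/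

import Mathlib

/-- The divergence of a vector field `w : ℝⁿ → ℝⁿ` at `x`, namely the trace of its
Fréchet derivative: `div w (x) = tr (Dw(x))`. -/
noncomputable def divg {n : ℕ}
    (w : EuclideanSpace ℝ (Fin n) → EuclideanSpace ℝ (Fin n))
    (x : EuclideanSpace ℝ (Fin n)) : ℝ :=
  LinearMap.trace ℝ (EuclideanSpace ℝ (Fin n)) (fderiv ℝ w x).toLinearMap

/-- **Fokker–Planck transformation.** On an open set where the
density `ρ` is `C²` and positive and the drift `b` is `C¹`, with the
score-corrected velocity field `ṽ = b − A ∇ₓ log ρ`, the Fokker–Planck identity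
`∂ₜρ + divₓ(ρ b) = divₓ(A ∇ₓ ρ)` holds at a point iff the continuity-equation
identity `∂ₜρ + divₓ(ρ ṽ) = 0` holds there. -/
theorem stmt6 (n : ℕ) (U : Set (ℝ × EuclideanSpace ℝ (Fin n))) (hU : IsOpen U)
    (ρ : ℝ × EuclideanSpace ℝ (Fin n) → ℝ)
    (hρ : ContDiffOn ℝ 2 ρ U) (hpos : ∀ p ∈ U, 0 < ρ p)
    (b : ℝ × EuclideanSpace ℝ (Fin n) → EuclideanSpace ℝ (Fin n))
    (hb : ContDiffOn ℝ 1 b U)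
    (A : EuclideanSpace ℝ (Fin n) →L[ℝ] EuclideanSpace ℝ (Fin n))
    (vtil : ℝ × EuclideanSpace ℝ (Fin n) → EuclideanSpace ℝ (Fin n))
    (hv : ∀ p ∈ U, vtil p
      = b p - A (gradient (fun y => Real.log (ρ (p.1, y))) p.2)) :
    ∀ p ∈ U,
      ((deriv (fun s => ρ (s, p.2)) p.1
          + divg (fun y => ρ (p.1, y) • b (p.1, y)) p.2
        = divg (fun y => A (gradient (fun z => ρ (p.1, z)) y)) p.2)
      ↔ (deriv (fun s => ρ (s, p.2)) p.1
          + divg (fun y => ρ (p.1, y) • vtil (p.1, y)) p.2 = 0)) := by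
  classical
  rintro ⟨t, x⟩ hp
  dsimp only
  have hincl : ∀ y : EuclideanSpace ℝ (Fin n),
      ContDiffAt ℝ 2 (fun z : EuclideanSpace ℝ (Fin n) => (t, z)) y := fun y =>
    ContDiffAt.prodMk contDiffAt_const contDiffAt_id
  have hmem : ∀ᶠ y in nhds x, (t, y) ∈ U := by
    have hc : Continuous (fun y : EuclideanSpace ℝ (Fin n) => (t, y)) :=
      continuous_const.prodMk continuous_id
    exact hc.continuousAt.preimage_mem_nhds (hU.mem_nhds hp)
  have hfAt : ∀ y : EuclideanSpace ℝ (Fin n), (t, y) ∈ U →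
      ContDiffAt ℝ 2 (fun z : EuclideanSpace ℝ (Fin n) => ρ (t, z)) y := by
    intro y hy
    exact (hρ.contDiffAt (hU.mem_nhds hy)).comp y (hincl y)
  -- key pointwise identity near x
  have key : (fun y => ρ (t, y) • vtil (t, y)) =ᶠ[nhds x]
      (fun y => ρ (t, y) • b (t, y) - A (gradient (fun z => ρ (t, z)) y)) := by
    filter_upwards [hmem] with y hy
    have hne : ρ (t, y) ≠ 0 := (hpos _ hy).ne'
    have hdf : DifferentiableAt ℝ (fun z : EuclideanSpace ℝ (Fin n) => ρ (t, z)) y :=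
      (hfAt y hy).differentiableAt (by norm_num)
    have hgrad : gradient (fun z => Real.log (ρ (t, z))) y
        = (ρ (t, y))⁻¹ • gradient (fun z : EuclideanSpace ℝ (Fin n) => ρ (t, z)) y := by
      unfold gradient
      rw [(hdf.hasFDerivAt.log hne).fderiv, map_smul]
    have hvy := hv (t, y) hy
    simp only at hvy
    rw [hvy, hgrad, smul_sub, map_smul, smul_smul, mul_inv_cancel₀ hne, one_smul]
  -- differentiability facts at x
  have hfx : ContDiffAt ℝ 2 (fun z : EuclideanSpace ℝ (Fin n) => ρ (t, z)) x := hfAt x hp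
  have hbx : DifferentiableAt ℝ (fun z : EuclideanSpace ℝ (Fin n) => b (t, z)) x := by
    have h1 : ContDiffAt ℝ 1 (fun z : EuclideanSpace ℝ (Fin n) => b (t, z)) x :=
      (hb.contDiffAt (hU.mem_nhds hp)).comp x ((hincl x).of_le one_le_two)
    exact h1.differentiableAt one_ne_zero
  have hsb : DifferentiableAt ℝ (fun y => ρ (t, y) • b (t, y)) x :=
    (hfx.differentiableAt (by norm_num)).smul hbx
  have hfd : DifferentiableAt ℝ (fderiv ℝ (fun z : EuclideanSpace ℝ (Fin n) => ρ (t, z))) x := by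
    have := hfx.fderiv_right (m := 1) (by norm_num)
    exact this.differentiableAt one_ne_zero
  have hG : DifferentiableAt ℝ
      (fun y => A (gradient (fun z : EuclideanSpace ℝ (Fin n) => ρ (t, z)) y)) x := by
    have h1 : DifferentiableAt ℝ
        (fun y => gradient (fun z : EuclideanSpace ℝ (Fin n) => ρ (t, z)) y) x := by
      have h := ((InnerProductSpace.toDual ℝ
          (EuclideanSpace ℝ (Fin n))).symm.differentiable).differentiableAt
          (x := fderiv ℝ (fun z : EuclideanSpace ℝ (Fin n) => ρ (t, z)) x)
      exact h.comp x hfd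
    exact A.differentiable.differentiableAt.comp x h1
  -- divergence identity
  have hdiv : divg (fun y => ρ (t, y) • vtil (t, y)) x
      = divg (fun y => ρ (t, y) • b (t, y)) x
        - divg (fun y => A (gradient (fun z => ρ (t, z)) y)) x := by
    unfold divg
    rw [key.fderiv_eq, fderiv_fun_sub hsb hG]
    simp
  constructor <;> intro h <;> linarith [hdiv]
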